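/- (Norm bound for an η-approximate subproblem solution.) Let H be a real Hilbert space and Q : H → ℝ ∪ {+∞} an m-strongly convex, proper, lower semicontinuous function with m > 0, Q(0) = 0, unique minimizer p*, and optimal value Q* = Q(p*) ≤ 0. If p satisfies Q(p) − Q* ≤ η (−Q*) for some η ≥ 0, then ‖p‖ ≤ (√η + 1) √(2/m) √(−Q*). -/
import Mathlib


open Metric Filter

/-- `m`-strong convexity for an extended-real-valued function. -/
def StronglyConvexEReal {H : Type*} [NormedAddCommGroup H] [InnerProductSpace ℝ H]
    (m : ℝ) (Q : H → EReal) : Prop :=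
  ∀ x y : H, ∀ a b : ℝ, 0 ≤ a → 0 ≤ b → a + b = 1 →
    Q (a • x + b • y) ≤
      (a : EReal) * Q x + (b : EReal) * Q y - ((m / 2 * a * b * ‖x - y‖ ^ 2 : ℝ) : EReal)

/-- norm bound for an η-approximate subproblem solution: if `Q` is
`m`-strongly convex, proper, lsc, `Q(0) = 0`, with minimizer `p*` and optimal value
`Q* = Q(p*) ≤ 0`, then `Q(p) − Q* ≤ η(−Q*)` implies
`‖p‖ ≤ (√η + 1)√(2/m)√(−Q*)`. -/
theorem statement15
    {H : Type*} [NormedAddCommGroup H] [InnerProductSpace ℝ H] [CompleteSpace H]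
    (Q : H → EReal) (m η Qstar : ℝ) (pstar p : H)
    (hm : 0 < m)
    (hQ_sc : StronglyConvexEReal m Q)
    -- Q : H → ℝ ∪ {+∞} proper (never −∞, finite somewhere)
    (hQ_nebot : ∀ z : H, Q z ≠ ⊥)
    (hQ_proper : ∃ z : H, Q z ≠ ⊤)
    (hQ_lsc : LowerSemicontinuous Q)
    -- Q(0) = 0
    (hQ0 : Q 0 = 0)
    -- p* is the (unique) minimizer of Q, with optimal value Q* = Q(p*) ≤ 0
    (hpstar : ∀ z : H, Q pstar ≤ Q z)
    (hQstar : Q pstar = (Qstar : EReal))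
    (hQstar_le : Qstar ≤ 0)
    -- multiplicative inexactness: Q(p) − Q* ≤ η (−Q*) with η ≥ 0
    (hη : 0 ≤ η)
    (hp : Q p - Q pstar ≤ (η : EReal) * -(Q pstar)) :
    ‖p‖ ≤ (Real.sqrt η + 1) * Real.sqrt (2 / m) * Real.sqrt (-Qstar) := by
  -- quadratic growth lemma
  have growth : ∀ (q : H) (qv : ℝ), Q q = (qv : EReal) →
      Qstar + m / 2 * ‖q - pstar‖ ^ 2 ≤ qv := by
    intro q qv hq
    have key : ∀ a : ℝ, 0 < a → a < 1 →
        m / 2 * (1 - a) * ‖q - pstar‖ ^ 2 ≤ qv - Qstar := by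
      intro a ha ha1
      have h := hQ_sc q pstar a (1 - a) ha.le (by linarith) (by ring)
      have h2 : (Qstar : EReal) ≤ Q (a • q + (1 - a) • pstar) := by
        rw [← hQstar]; exact hpstar _
      have h3 : (Qstar : EReal) ≤
          ((a * qv + (1 - a) * Qstar - m / 2 * a * (1 - a) * ‖q - pstar‖ ^ 2 : ℝ) : EReal) := by
        refine h2.trans (h.trans_eq ?_)
        rw [hq, hQstar]
        norm_cast
      rw [EReal.coe_le_coe_iff] at h3
      nlinarith
    have hT : Filter.Tendsto (fun a : ℝ => m / 2 * (1 - a) * ‖q - pstar‖ ^ 2)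
        (nhdsWithin 0 (Set.Ioi 0)) (nhds (m / 2 * (1 - 0) * ‖q - pstar‖ ^ 2)) := by
      apply Filter.Tendsto.mono_left _ nhdsWithin_le_nhds
      exact (Continuous.tendsto (by continuity) 0)
    have hEv : ∀ᶠ a in nhdsWithin (0:ℝ) (Set.Ioi 0),
        (fun a : ℝ => m / 2 * (1 - a) * ‖q - pstar‖ ^ 2) a ≤ qv - Qstar := by
      filter_upwards [Ioo_mem_nhdsGT_of_mem (by norm_num : (0:ℝ) ∈ Set.Ico 0 1)] with a ha
      exact key a ha.1 ha.2
    have := le_of_tendsto hT hEv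
    simp only [sub_zero, mul_one] at this
    linarith
  -- Q p is finite
  rw [hQstar] at hp
  have hQp_ne_top : Q p ≠ ⊤ := by
    intro htop
    rw [htop] at hp
    rw [EReal.top_sub_coe] at hp
    have : ((η : EReal) * -(Qstar : EReal)) = ((η * -Qstar : ℝ) : EReal) := by norm_cast
    rw [this] at hp
    exact (EReal.coe_lt_top _).not_ge hp
  set pv := (Q p).toReal with hpv
  have hQp : Q p = (pv : EReal) := (EReal.coe_toReal hQp_ne_top (hQ_nebot p)).symm
  rw [hQp] at hp
  have hp' : pv - Qstar ≤ η * -Qstar := by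
    have : ((pv - Qstar : ℝ) : EReal) ≤ ((η * -Qstar : ℝ) : EReal) := by
      convert hp using 1 <;> norm_cast
    exact_mod_cast this
  have g1 := growth p pv hQp
  have g0 := growth 0 0 (by rw [hQ0]; norm_cast)
  have hn0 : ‖(0:H) - pstar‖ = ‖pstar‖ := by rw [zero_sub, norm_neg]
  rw [hn0] at g0
  have hQs_nonneg : 0 ≤ -Qstar := by linarith
  have h1 : ‖p - pstar‖ ≤ Real.sqrt η * Real.sqrt (2 / m) * Real.sqrt (-Qstar) := by
    have hb : ‖p - pstar‖ ^ 2 ≤ η * (2 / m * -Qstar) := by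
      have h' : ‖p - pstar‖ ^ 2 * m ≤ η * -Qstar * 2 := by nlinarith
      calc ‖p - pstar‖ ^ 2 = ‖p - pstar‖ ^ 2 * m / m := by field_simp
        _ ≤ η * -Qstar * 2 / m := by gcongr
        _ = η * (2 / m * -Qstar) := by ring
    calc ‖p - pstar‖ = Real.sqrt (‖p - pstar‖ ^ 2) := (Real.sqrt_sq (norm_nonneg _)).symm
      _ ≤ Real.sqrt (η * (2 / m * -Qstar)) := Real.sqrt_le_sqrt hb
      _ = Real.sqrt η * Real.sqrt (2 / m) * Real.sqrt (-Qstar) := by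
          rw [Real.sqrt_mul hη, Real.sqrt_mul (by positivity), mul_assoc]
  have h2 : ‖pstar‖ ≤ Real.sqrt (2 / m) * Real.sqrt (-Qstar) := by
    have hb : ‖pstar‖ ^ 2 ≤ 2 / m * -Qstar := by
      have h' : ‖pstar‖ ^ 2 * m ≤ -Qstar * 2 := by nlinarith
      calc ‖pstar‖ ^ 2 = ‖pstar‖ ^ 2 * m / m := by field_simp
        _ ≤ -Qstar * 2 / m := by gcongr
        _ = 2 / m * -Qstar := by ring
    calc ‖pstar‖ = Real.sqrt (‖pstar‖ ^ 2) := (Real.sqrt_sq (norm_nonneg _)).symm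
      _ ≤ Real.sqrt (2 / m * -Qstar) := Real.sqrt_le_sqrt hb
      _ = Real.sqrt (2 / m) * Real.sqrt (-Qstar) := Real.sqrt_mul (by positivity) _
  have htri : ‖p‖ ≤ ‖p - pstar‖ + ‖pstar‖ := by
    simpa using norm_add_le (p - pstar) pstar
  have : (Real.sqrt η + 1) * Real.sqrt (2 / m) * Real.sqrt (-Qstar)
      = Real.sqrt η * Real.sqrt (2 / m) * Real.sqrt (-Qstar)
        + Real.sqrt (2 / m) * Real.sqrt (-Qstar) := by ring
  linarith
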